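/- For every integer N ≥ 2, Σ_{k=1}^{N−2} tan²(πk/(2N−2)) = (N−2)(2N−3)/3. -/

import Mathlib

open Real

open Polynomial Finset Complex

lemma im_pow_eq (n : ℕ) (t : ℝ) :
    ((1 + (t:ℂ) * Complex.I) ^ (2*n)).im
      = ∑ m ∈ Finset.range n, (-1:ℝ)^m * ((2*n).choose (2*m+1)) * t^(2*m+1) := by
  have h1 : (1 + (t:ℂ) * Complex.I) ^ (2*n)
      = ∑ j ∈ Finset.range (2*n+1), ((t:ℂ)*Complex.I)^j * ((2*n).choose j : ℂ) := by
    rw [add_comm, add_pow]; simp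
  rw [h1, Complex.im_sum]
  have key : ∀ j ∈ Finset.range (2*n+1), (((t:ℂ)*Complex.I)^j * ((2*n).choose j : ℂ)).im
      = if Odd j then (-1:ℝ)^(j/2) * ((2*n).choose j) * t^j else 0 := by
    intro j _
    rcases Nat.even_or_odd j with ⟨m, rfl⟩ | ⟨m, rfl⟩
    · have h2 : ((t:ℂ)*Complex.I)^(m+m) * ((2*n).choose (m+m) : ℂ)
          = (((t^(m+m) * (-1)^m * ((2*n).choose (m+m)) : ℝ)) : ℂ) := by
        have h3 : (m+m) = 2*m := by ring
        rw [h3, mul_pow, pow_mul, pow_mul, Complex.I_sq]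
        push_cast; ring
      rw [h2, Complex.ofReal_im, if_neg (by simp [Nat.not_odd_iff_even, Nat.even_add])]
    · have h2 : ((t:ℂ)*Complex.I)^(2*m+1) * ((2*n).choose (2*m+1) : ℂ)
          = (((-1:ℝ)^m * ((2*n).choose (2*m+1)) * t^(2*m+1) : ℝ) : ℂ) * Complex.I := by
        have hI : (Complex.I)^(2*m+1) = ((-1:ℂ))^m * Complex.I := by
          rw [pow_succ, pow_mul, Complex.I_sq]
        rw [mul_pow, hI]
        push_cast; ring
      rw [h2, Complex.mul_I_im, Complex.ofReal_re, if_pos ⟨m, by ring⟩]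
      have h4 : (2*m+1)/2 = m := by omega
      rw [h4]
  rw [Finset.sum_congr rfl key, Finset.sum_ite, Finset.sum_const_zero, add_zero]
  refine (Finset.sum_nbij' (fun m => 2*m+1) (fun j => j/2) ?_ ?_ ?_ ?_ ?_).symm
  · intro m hm
    simp only [Finset.mem_filter, Finset.mem_range] at *
    exact ⟨by omega, ⟨m, by ring⟩⟩
  · intro j hj
    simp only [Finset.mem_filter, Finset.mem_range] at hj ⊢
    obtain ⟨h, m, rfl⟩ := hj
    omega
  · intro m _
    show (2*m+1)/2 = m
    omega
  · intro j hj
    simp only [Finset.mem_filter, Finset.mem_range] at hj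
    obtain ⟨h, m, rfl⟩ := hj
    show 2*((2*m+1)/2)+1 = 2*m+1
    omega
  · intro m hm
    have h4 : (2*m+1)/2 = m := by omega
    rw [h4]

lemma pow_real (n k : ℕ) (hn : 0 < n) (θ : ℝ) (hθ : θ = π * k / (2*n)) (hc : Real.cos θ ≠ 0) :
    ((1 + (Real.tan θ : ℂ) * Complex.I) ^ (2*n)).im = 0 := by
  have hcC : (Real.cos θ : ℂ) ≠ 0 := by exact_mod_cast hc
  have h1 : (1 + (Real.tan θ : ℂ) * Complex.I) = (Real.cos θ : ℂ)⁻¹ * Complex.exp (θ * Complex.I) := by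
    rw [Complex.exp_mul_I, ← Complex.ofReal_cos, ← Complex.ofReal_sin, Real.tan_eq_sin_div_cos]
    push_cast
    have hcC2 : Complex.cos (θ:ℂ) ≠ 0 := by rw [← Complex.ofReal_cos]; exact hcC
    field_simp
  have h2 : Complex.exp ((θ:ℂ) * Complex.I) ^ (2*n) = ((-1:ℝ)^k : ℂ) := by
    rw [← Complex.exp_nat_mul]
    have h3 : (2*n : ℕ) * ((θ:ℂ) * Complex.I) = (k:ℂ) * ((π:ℂ) * Complex.I) := by
      rw [hθ]
      have hn' : (n:ℂ) ≠ 0 := by exact_mod_cast hn.ne'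
      push_cast
      field_simp
    rw [h3, Complex.exp_nat_mul, Complex.exp_pi_mul_I]
    push_cast
    ring
  rw [h1, mul_pow, h2,
    show ((Real.cos θ:ℂ))⁻¹ ^(2*n) * ((-1:ℝ)^k : ℂ) = ((((Real.cos θ)⁻¹)^(2*n) * (-1)^k : ℝ) : ℂ) by
      push_cast; ring,
    Complex.ofReal_im]

lemma multiset_esymm_one (s : Multiset ℝ) : s.esymm 1 = s.sum := by
  simp [Multiset.esymm, Multiset.powersetCard_one, Multiset.map_map, Function.comp]

lemma choose_three (m : ℕ) (hm : 2 ≤ m) : ((m.choose 3 : ℕ) : ℝ) = (m:ℝ) * ((m:ℝ)-1) * ((m:ℝ)-2) / 6 := by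
  have h : m.descFactorial 3 = 6 * m.choose 3 := Nat.descFactorial_eq_factorial_mul_choose m 3
  have h2 : m.descFactorial 3 = (m-2) * ((m-1) * (m * 1)) := by simp [Nat.descFactorial]
  rw [h2] at h
  have hc := congrArg (fun x : ℕ => (x:ℝ)) h
  push_cast [Nat.cast_sub (by omega : 2 ≤ m), Nat.cast_sub (by omega : 1 ≤ m)] at hc
  linarith

/-- For every integer `N ≥ 2`, `∑_{k=1}^{N−2} tan²(πk/(2N−2)) = (N−2)(2N−3)/3`. -/
theorem sum_tan_sq (N : ℕ) (hN : 2 ≤ N) :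
    ∑ k ∈ Finset.Icc 1 (N - 2), Real.tan (π * (k : ℝ) / (2 * (N : ℝ) - 2)) ^ 2
      = ((N : ℝ) - 2) * (2 * (N : ℝ) - 3) / 3 := by
  obtain ⟨n, rfl⟩ : ∃ n, N = n + 1 := ⟨N - 1, by omega⟩
  have hn1 : 1 ≤ n := by omega
  have hnR : (0:ℝ) < n := by exact_mod_cast hn1
  push_cast
  have hsum : ∑ k ∈ Finset.Icc 1 (n - 1), Real.tan (π * (k : ℝ) / (2 * ((n:ℝ)+1) - 2)) ^ 2
      = ∑ k ∈ Finset.Icc 1 (n - 1), Real.tan (π * (k : ℝ) / (2 * (n:ℝ))) ^ 2 := by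
    refine Finset.sum_congr rfl fun k _ => ?_
    have h : π * (k:ℝ) / (2 * ((n:ℝ)+1) - 2) = π * (k:ℝ) / (2 * (n:ℝ)) := by ring_nf
    rw [h]
  rw [hsum]
  rcases eq_or_lt_of_le hn1 with h1 | h2
  · rw [← h1]
    norm_num
  have hn2 : 2 ≤ n := h2
  clear hn1 hN hsum
  -- the polynomial
  set P : Polynomial ℝ := ∑ m ∈ Finset.range n,
      Polynomial.C ((-1:ℝ)^m * ((2*n).choose (2*m+1))) * Polynomial.X^m with hP
  have hcoeff : ∀ j, P.coeff j = if j < n then (-1:ℝ)^j * ((2*n).choose (2*j+1)) else 0 := by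
    intro j
    rw [hP, Polynomial.finset_sum_coeff]
    simp only [Polynomial.coeff_C_mul, Polynomial.coeff_X_pow, mul_ite, mul_one, mul_zero]
    rw [Finset.sum_ite_eq (Finset.range n) j]
    simp [Finset.mem_range]
  -- angles
  set f : ℕ → ℝ := fun k => Real.tan (π * k / (2*(n:ℝ))) ^ 2 with hf
  have hθmem : ∀ k ∈ Finset.Icc 1 (n-1), 0 < π * k / (2*(n:ℝ)) ∧ π * k / (2*(n:ℝ)) < π / 2 := by
    intro k hk
    simp only [Finset.mem_Icc] at hk
    have hk1 : (1:ℝ) ≤ k := by exact_mod_cast hk.1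
    have hkn : (k:ℝ) < n := by exact_mod_cast (by omega : k < n)
    constructor
    · positivity
    · rw [div_lt_div_iff₀ (by positivity) (by norm_num)]
      nlinarith [pi_pos]
  have htanpos : ∀ k ∈ Finset.Icc 1 (n-1), 0 < Real.tan (π * k / (2*(n:ℝ))) := by
    intro k hk
    obtain ⟨h1, h2⟩ := hθmem k hk
    exact Real.tan_pos_of_pos_of_lt_pi_div_two h1 h2
  -- roots
  have hroot : ∀ k ∈ Finset.Icc 1 (n-1), P.eval (f k) = 0 := by
    intro k hk
    obtain ⟨ha, hb⟩ := hθmem k hk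
    have hcos : Real.cos (π * k / (2*(n:ℝ))) ≠ 0 :=
      (Real.cos_pos_of_mem_Ioo ⟨by linarith [pi_pos], hb⟩).ne'
    have him := pow_real n k (by omega) (π * k / (2*(n:ℝ))) rfl hcos
    rw [im_pow_eq] at him
    set t := Real.tan (π * k / (2*(n:ℝ))) with ht
    have key : t * P.eval (t^2) = 0 := by
      rw [hP, Polynomial.eval_finset_sum, Finset.mul_sum, ← him]
      refine Finset.sum_congr rfl fun m _ => ?_
      simp only [Polynomial.eval_mul, Polynomial.eval_C, Polynomial.eval_pow, Polynomial.eval_X]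
      have hpow : t^(2*m+1) = (t^2)^m * t := by rw [pow_succ, pow_mul]
      rw [hpow]
      ring
    have htne : t ≠ 0 := (htanpos k hk).ne'
    have := mul_eq_zero.mp key
    tauto
  -- injectivity
  have hinj : ∀ k ∈ Finset.Icc 1 (n-1), ∀ l ∈ Finset.Icc 1 (n-1), f k = f l → k = l := by
    intro k hk l hl he
    simp only [hf] at he
    have h1 := htanpos k hk
    have h2 := htanpos l hl
    have he2 : Real.tan (π * k / (2*(n:ℝ))) = Real.tan (π * l / (2*(n:ℝ))) := by
      nlinarith [sq_nonneg (Real.tan (π * k / (2*(n:ℝ))) - Real.tan (π * l / (2*(n:ℝ)))),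
        sq_nonneg (Real.tan (π * k / (2*(n:ℝ))) + Real.tan (π * l / (2*(n:ℝ))))]
    obtain ⟨hk1, hk2⟩ := hθmem k hk
    obtain ⟨hl1, hl2⟩ := hθmem l hl
    have hθeq : π * k / (2*(n:ℝ)) = π * l / (2*(n:ℝ)) :=
      Real.injOn_tan ⟨by linarith [pi_pos], hk2⟩ ⟨by linarith [pi_pos], hl2⟩ he2
    have : (k:ℝ) = l := by
      field_simp at hθeq
      linarith
    exact_mod_cast this
  -- degree facts
  have hchoose1 : (2*n).choose (2*(n-1)+1) = 2*n := by
    have h3 : 2*(n-1)+1 = 2*n - 1 := by omega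
    rw [h3, Nat.choose_symm (by omega : 1 ≤ 2*n), Nat.choose_one_right]
  have hlc : P.coeff (n-1) = (-1:ℝ)^(n-1) * (2*n) := by
    rw [hcoeff, if_pos (by omega), hchoose1]
    push_cast
    ring
  have hlcne : P.coeff (n-1) ≠ 0 := by
    rw [hlc]
    have : ((2*n : ℕ) : ℝ) ≠ 0 := by positivity
    exact mul_ne_zero (pow_ne_zero _ (by norm_num)) (ne_of_gt (by positivity))
  have hdegle : P.natDegree ≤ n - 1 := by
    rw [Polynomial.natDegree_le_iff_coeff_eq_zero]
    intro j hj
    rw [hcoeff, if_neg (by omega)]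
  have hdeg : P.natDegree = n - 1 :=
    le_antisymm hdegle (Polynomial.le_natDegree_of_ne_zero hlcne)
  have hPne : P ≠ 0 := fun h => hlcne (by rw [h, Polynomial.coeff_zero])
  -- the multiset of roots
  set M : Multiset ℝ := (Finset.Icc 1 (n-1)).val.map f with hM
  have hMnodup : M.Nodup := by
    refine Multiset.Nodup.map_on ?_ (Finset.Icc 1 (n-1)).nodup
    intro k hk l hl he
    exact hinj k hk l hl he
  have hMcard : Multiset.card M = n - 1 := by
    rw [hM, Multiset.card_map]
    simpa using Nat.card_Icc 1 (n-1)
  have hMle : M ≤ P.roots := by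
    rw [Multiset.le_iff_subset hMnodup]
    intro a ha
    rw [hM, Multiset.mem_map] at ha
    obtain ⟨k, hk, rfl⟩ := ha
    rw [Polynomial.mem_roots hPne]
    exact hroot k hk
  have hroots : P.roots = M := by
    refine (Multiset.eq_of_le_of_card_le hMle ?_).symm
    rw [hMcard]
    exact (Polynomial.card_roots' P).trans_eq hdeg
  -- Vieta
  have hcards : Multiset.card P.roots = P.natDegree := by
    rw [hroots, hMcard, hdeg]
  have hv := Polynomial.coeff_eq_esymm_roots_of_card hcards
      (show n - 2 ≤ P.natDegree by omega)
  rw [hdeg, show n - 1 - (n - 2) = 1 by omega, hroots, multiset_esymm_one] at hv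
  have hMsum : M.sum = ∑ k ∈ Finset.Icc 1 (n-1), f k := rfl
  have hlead : P.leadingCoeff = (-1:ℝ)^(n-1) * (2*n) := by
    rw [Polynomial.leadingCoeff, hdeg, hlc]
  rw [hlead, hMsum, hcoeff, if_pos (by omega : n - 2 < n)] at hv
  -- now extract the sum
  set S := ∑ k ∈ Finset.Icc 1 (n-1), f k with hS
  have hch3 : (2*n).choose (2*(n-2)+1) = (2*n).choose 3 := by
    have h4 : 2*(n-2)+1 = 2*n - 3 := by omega
    rw [h4, ← Nat.choose_symm (by omega : 3 ≤ 2*n)]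
  rw [hch3] at hv
  have e1 : (-1:ℝ)^(n-2) = (-1)^n := by
    calc (-1:ℝ)^(n-2) = (-1)^(n-2) * (-1)^2 := by norm_num
    _ = (-1)^((n-2)+2) := (pow_add _ _ _).symm
    _ = (-1)^n := by rw [show (n-2)+2 = n by omega]
  have e2 : (-1:ℝ)^(n-1) * (-1) = (-1)^n := by
    calc (-1:ℝ)^(n-1) * (-1) = (-1)^((n-1)+1) := (pow_succ _ _).symm
    _ = (-1)^n := by rw [show (n-1)+1 = n by omega]
  rw [e1] at hv
  have hv2 : (-1:ℝ)^n * (((2*n).choose 3 : ℕ) : ℝ) = (-1:ℝ)^n * (2*(n:ℝ) * S) := by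
    rw [hv, ← e2]
    push_cast
    ring
  have hsgn : ((-1:ℝ)^n) ≠ 0 := pow_ne_zero _ (by norm_num)
  have hv3 : (((2*n).choose 3 : ℕ) : ℝ) = 2*(n:ℝ) * S := mul_left_cancel₀ hsgn hv2
  have hc3 := choose_three (2*n) (by omega)
  rw [hc3] at hv3
  push_cast at hv3
  have h2n : (0:ℝ) < 2*(n:ℝ) := by positivity
  have hv4 : 2*(n:ℝ) * ((2*(n:ℝ)-1) * (2*(n:ℝ)-2) / 6) = 2*(n:ℝ) * S := by
    rw [← hv3]; ring
  have hv5 : (2*(n:ℝ)-1) * (2*(n:ℝ)-2) / 6 = S := mul_left_cancel₀ h2n.ne' hv4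
  rw [← hv5]
  ring
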